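/- Let m ≥ 1 and let a, b, c : ℝ^m → ℝ be continuous with a₊ + c₊ bounded on ℝ^m, b(x) > 0 for all x, and b(x) ≥ C·|x|^{−μ} for |x| ≥ R₀, for some constants C > 0, R₀ > 0 and 0 ≤ μ < 2. Let σ > 1, τ < 1, γ ∈ ℝ, and set γ* = max{1, γ}. Let u be a positive C² function on ℝ^m satisfying Δu + a(x)u − b(x)u^σ + c(x)u^τ ≥ 0 at every point of Ω_γ = {x ∈ ℝ^m : u(x) > γ}. If H₀ ≥ 0 is a constant with (a₊(x) + c₊(x))/b(x) ≤ H₀ for all x ∈ Ω_{γ*} = {x : u(x) > γ*}, then u is bounded above and u(x) ≤ max{γ*, H₀^{1/(σ−1)}} for all x ∈ ℝ^m. -/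

import Mathlib

open Real Set Filter Topology RealInnerProductSpace

section AuxCalculus

-- 1D second derivative test at a local max
lemma second_deriv_nonpos_of_isLocalMax' {f : ℝ → ℝ} {t₀ : ℝ}
    (hf : ContDiffAt ℝ 2 f t₀) (hmax : IsLocalMax f t₀) :
    deriv (deriv f) t₀ ≤ 0 := by
  by_contra hpos
  push_neg at hpos
  obtain ⟨U, hU, hfU⟩ := hf.contDiffOn (le_refl 2) (by simp)
  obtain ⟨ε, hε, hball⟩ := Metric.mem_nhds_iff.1 hU
  set B := Metric.ball t₀ ε with hB
  have hBopen : IsOpen B := Metric.isOpen_ball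
  have hfB : ContDiffOn ℝ 2 f B := hfU.mono hball
  have hdf1 : ContDiffOn ℝ 1 (deriv f) B := hfB.deriv_of_isOpen hBopen (by norm_num)
  have hdf0 : ContDiffOn ℝ 0 (deriv (deriv f)) B := hdf1.deriv_of_isOpen hBopen (by norm_num)
  have hcont2 : ContinuousOn (deriv (deriv f)) B := hdf0.continuousOn
  have hct : ContinuousAt (deriv (deriv f)) t₀ :=
    hcont2.continuousAt (hBopen.mem_nhds (Metric.mem_ball_self hε))
  have hev : ∀ᶠ t in 𝓝 t₀, 0 < deriv (deriv f) t := hct.eventually (eventually_gt_nhds hpos)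
  have hev2 : ∀ᶠ t in 𝓝 t₀, f t ≤ f t₀ := hmax
  have hev3 : ∀ᶠ t in 𝓝 t₀, t ∈ B := hBopen.mem_nhds (Metric.mem_ball_self hε)
  obtain ⟨η, hη, hηprop⟩ := Metric.eventually_nhds_iff_ball.1 ((hev.and hev2).and hev3)
  set s := t₀ + η / 2 with hs
  have hsball : s ∈ Metric.ball t₀ η := by
    simp only [Metric.mem_ball, hs, Real.dist_eq]
    rw [add_sub_cancel_left]
    rw [abs_of_pos (by linarith)]
    linarith
  have hIccsub : Icc t₀ s ⊆ Metric.ball t₀ η := by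
    intro t ht
    simp only [Metric.mem_ball, Real.dist_eq]
    rw [abs_of_nonneg (by linarith [ht.1])]
    have := ht.2
    simp only [hs] at this ⊢
    linarith
  have hg0 : deriv f t₀ = 0 := hmax.deriv_eq_zero
  have hcontg : ContinuousOn (deriv f) (Icc t₀ s) :=
    hdf1.continuousOn.mono (fun t ht => hηprop t (hIccsub ht) |>.2)
  have hgmono : StrictMonoOn (deriv f) (Icc t₀ s) := by
    apply strictMonoOn_of_deriv_pos (convex_Icc _ _) hcontg
    intro t ht
    rw [interior_Icc] at ht
    exact (hηprop t (hIccsub ⟨le_of_lt ht.1, le_of_lt ht.2⟩)).1.1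
  have hgpos : ∀ t ∈ Ioc t₀ s, 0 < deriv f t := by
    intro t ht
    have := hgmono (left_mem_Icc.2 (by simp [hs]; linarith)) ⟨le_of_lt ht.1, ht.2⟩ ht.1
    rwa [hg0] at this
  have hcontf : ContinuousOn f (Icc t₀ s) := by
    apply (hfB.continuousOn).mono
    intro t ht; exact hηprop t (hIccsub ht) |>.2
  have hfmono : StrictMonoOn f (Icc t₀ s) := by
    apply strictMonoOn_of_deriv_pos (convex_Icc _ _) hcontf
    intro t ht
    rw [interior_Icc] at ht
    exact hgpos t ⟨ht.1, le_of_lt ht.2⟩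
  have h1 : f t₀ < f s := hfmono (left_mem_Icc.2 (by simp [hs]; linarith))
      (right_mem_Icc.2 (by simp [hs]; linarith)) (by simp [hs]; linarith)
  have h2 : f s ≤ f t₀ := (hηprop s hsball).1.2
  linarith

lemma fderiv2_nonpos_of_isLocalMax' {E : Type*} [NormedAddCommGroup E] [NormedSpace ℝ E]
    {w : E → ℝ} {y : E} (hw : ContDiffAt ℝ 2 w y) (hmax : IsLocalMax w y) (e : E) :
    fderiv ℝ (fderiv ℝ w) y e e ≤ 0 := by
  set ℓ : ℝ → E := fun t => y + t • e with hℓdef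
  have hℓ : ContDiff ℝ ⊤ ℓ := contDiff_const.add (contDiff_id.smul contDiff_const)
  have hℓ0 : ℓ 0 = y := by simp [hℓdef]
  have hℓd : ∀ t : ℝ, HasDerivAt ℓ e t := by
    intro t
    have h1 : HasDerivAt (fun t : ℝ => t • e) ((1:ℝ) • e) t := (hasDerivAt_id t).smul_const e
    rw [one_smul] at h1
    exact h1.const_add y
  set f : ℝ → ℝ := w ∘ ℓ with hfdef
  have hfC : ContDiffAt ℝ 2 f 0 := by
    apply ContDiffAt.comp
    · rw [hℓ0]; exact hw
    · exact (hℓ.of_le le_top).contDiffAt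
  have hfmax : IsLocalMax f 0 := by
    have htend : Tendsto ℓ (𝓝 0) (𝓝 y) := by
      rw [← hℓ0]; exact hℓ.continuous.continuousAt
    have h := htend.eventually hmax
    have : IsMaxFilter f (𝓝 0) 0 := by
      filter_upwards [h] with t ht
      simpa [hfdef, hℓ0] using ht
    exact this
  have key : deriv (deriv f) 0 = fderiv ℝ (fderiv ℝ w) y e e := by
    obtain ⟨U, hU, hwU⟩ := hw.contDiffOn (le_refl 2) (by simp)
    obtain ⟨V, hVU, hVopen, hyV⟩ := mem_nhds_iff.1 hU
    have hwV : ContDiffOn ℝ 2 w V := hwU.mono hVU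
    have hdiff : ∀ z ∈ V, DifferentiableAt ℝ w z := fun z hz =>
      ((hwV.contDiffAt (hVopen.mem_nhds hz)).differentiableAt (by norm_num))
    have hder : ∀ t : ℝ, ℓ t ∈ V → HasDerivAt f (fderiv ℝ w (ℓ t) e) t := by
      intro t ht
      exact ((hdiff _ ht).hasFDerivAt.comp_hasDerivAt t (hℓd t))
    have hevV : ∀ᶠ t in 𝓝 (0:ℝ), ℓ t ∈ V := by
      have htend : Tendsto ℓ (𝓝 0) (𝓝 y) := by
        rw [← hℓ0]; exact hℓ.continuous.continuousAt
      exact htend.eventually (hVopen.mem_nhds hyV)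
    have hEq : deriv f =ᶠ[𝓝 (0:ℝ)] fun t => fderiv ℝ w (ℓ t) e := by
      filter_upwards [hevV] with t ht
      exact (hder t ht).deriv
    rw [hEq.deriv_eq]
    have hw' : ContDiffAt ℝ 1 (fderiv ℝ w) y := hw.fderiv_right (by norm_num)
    have hdf : DifferentiableAt ℝ (fderiv ℝ w) y := hw'.differentiableAt (by norm_num)
    have h1 : HasDerivAt (fun t => fderiv ℝ w (ℓ t)) (fderiv ℝ (fderiv ℝ w) y e) 0 := by
      have hdf' : DifferentiableAt ℝ (fderiv ℝ w) (ℓ 0) := by rwa [hℓ0]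
      have h := hdf'.hasFDerivAt.comp_hasDerivAt 0 (hℓd 0)
      rw [hℓ0] at h
      exact h
    have h2 : HasDerivAt (fun t => fderiv ℝ w (ℓ t) e)
        (fderiv ℝ (fderiv ℝ w) y e e) 0 := by
      have := h1.clm_apply (hasDerivAt_const 0 e)
      simpa using this
    exact h2.deriv
  rw [← key]
  exact second_deriv_nonpos_of_isLocalMax' hfC hfmax

end AuxCalculus

/-- The Euclidean Laplacian: trace of the Hessian. -/
noncomputable def lap {m : ℕ} (u : EuclideanSpace ℝ (Fin m) → ℝ)
    (x : EuclideanSpace ℝ (Fin m)) : ℝ :=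
  ∑ i : Fin m, iteratedFDeriv ℝ 2 u x ![EuclideanSpace.single i 1, EuclideanSpace.single i 1]

section LapLemmas

lemma lap_eq_sum_fderiv2 {m : ℕ} (u : EuclideanSpace ℝ (Fin m) → ℝ)
    (x : EuclideanSpace ℝ (Fin m)) :
    lap u x = ∑ i : Fin m,
      fderiv ℝ (fderiv ℝ u) x (EuclideanSpace.single i 1) (EuclideanSpace.single i 1) := by
  unfold lap
  congr 1
  ext i
  rw [iteratedFDeriv_two_apply]
  simp

lemma lap_le_lap_of_isLocalMax_sub {m : ℕ} {u v : EuclideanSpace ℝ (Fin m) → ℝ}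
    {y : EuclideanSpace ℝ (Fin m)} (hu : ContDiffAt ℝ 2 u y) (hv : ContDiffAt ℝ 2 v y)
    (hmax : IsLocalMax (fun z => u z - v z) y) : lap u y ≤ lap v y := by
  obtain ⟨U, hU, huU⟩ := hu.contDiffOn (le_refl 2) (by simp)
  obtain ⟨V, hV, hvV⟩ := hv.contDiffOn (le_refl 2) (by simp)
  have hdiffu : ∀ᶠ z in 𝓝 y, DifferentiableAt ℝ u z := by
    obtain ⟨W, hWU, hWopen, hyW⟩ := mem_nhds_iff.1 hU
    filter_upwards [hWopen.mem_nhds hyW] with z hz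
    exact ((huU.mono hWU).contDiffAt (hWopen.mem_nhds hz)).differentiableAt (by norm_num)
  have hdiffv : ∀ᶠ z in 𝓝 y, DifferentiableAt ℝ v z := by
    obtain ⟨W, hWV, hWopen, hyW⟩ := mem_nhds_iff.1 hV
    filter_upwards [hWopen.mem_nhds hyW] with z hz
    exact ((hvV.mono hWV).contDiffAt (hWopen.mem_nhds hz)).differentiableAt (by norm_num)
  have hEq : fderiv ℝ (fun z => u z - v z) =ᶠ[𝓝 y]
      fun z => fderiv ℝ u z - fderiv ℝ v z := by
    filter_upwards [hdiffu, hdiffv] with z hzu hzv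
    exact fderiv_sub hzu hzv
  have hdu2' : ContDiffAt ℝ 1 (fderiv ℝ u) y := hu.fderiv_right (by norm_num)
  have hdv2' : ContDiffAt ℝ 1 (fderiv ℝ v) y := hv.fderiv_right (by norm_num)
  have hdu2 : DifferentiableAt ℝ (fderiv ℝ u) y := hdu2'.differentiableAt (by norm_num)
  have hdv2 : DifferentiableAt ℝ (fderiv ℝ v) y := hdv2'.differentiableAt (by norm_num)
  have hkey : ∀ e : EuclideanSpace ℝ (Fin m),
      fderiv ℝ (fderiv ℝ u) y e e - fderiv ℝ (fderiv ℝ v) y e e ≤ 0 := by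
    intro e
    have h2 := fderiv2_nonpos_of_isLocalMax' (hu.sub hv) hmax e
    rw [hEq.fderiv_eq] at h2
    rw [fderiv_fun_sub hdu2 hdv2] at h2
    simpa using h2
  rw [lap_eq_sum_fderiv2, lap_eq_sum_fderiv2, ← sub_nonpos, ← Finset.sum_sub_distrib]
  exact Finset.sum_nonpos fun i _ => hkey _

lemma hasFDerivAt_normSq' {m : ℕ} (z : EuclideanSpace ℝ (Fin m)) :
    HasFDerivAt (fun w : EuclideanSpace ℝ (Fin m) => ‖w‖^2)
      ((2:ℝ) • (innerSL ℝ z : EuclideanSpace ℝ (Fin m) →L[ℝ] ℝ)) z := by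
  have h := (hasFDerivAt_id (𝕜 := ℝ) z).inner ℝ (hasFDerivAt_id z)
  have hfun : (fun w : EuclideanSpace ℝ (Fin m) => ⟪w, w⟫)
      = fun w : EuclideanSpace ℝ (Fin m) => ‖w‖^2 := by
    funext w; exact real_inner_self_eq_norm_sq w
  simp only [id_eq] at h
  rw [hfun] at h
  refine h.congr_fderiv ?_
  ext v
  simp [fderivInnerCLM_apply, real_inner_comm, two_smul]

lemma lap_comp_normSq {m : ℕ} (φ ψ χ : ℝ → ℝ) (x : EuclideanSpace ℝ (Fin m))
    (hVC : ContDiffAt ℝ 2 (fun z : EuclideanSpace ℝ (Fin m) => φ (‖z‖^2)) x)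
    (hφ : ∀ᶠ t in 𝓝 (‖x‖^2), HasDerivAt φ (ψ t) t)
    (hψ : HasDerivAt ψ (χ (‖x‖^2)) (‖x‖^2)) :
    lap (fun z => φ (‖z‖^2)) x = 2*m*ψ (‖x‖^2) + 4*(‖x‖^2) * χ (‖x‖^2) := by
  classical
  set q : EuclideanSpace ℝ (Fin m) → ℝ := fun z => ‖z‖^2 with hqdef
  have hqC : ContDiff ℝ 2 q := contDiff_id.norm_sq ℝ
  have hqcont : Continuous q := hqC.continuous
  set V : EuclideanSpace ℝ (Fin m) → ℝ := fun z => φ (‖z‖^2) with hVdef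
  obtain ⟨s, hs, hsprop⟩ := hφ.exists_mem
  have hev : ∀ᶠ z in 𝓝 x, HasFDerivAt V
      (ψ (q z) • ((2:ℝ) • (innerSL ℝ z : EuclideanSpace ℝ (Fin m) →L[ℝ] ℝ))) z := by
    filter_upwards [hqcont.continuousAt.preimage_mem_nhds hs] with z hz
    have h1 : HasDerivAt φ (ψ (q z)) (q z) := hsprop _ hz
    have h2 := h1.comp_hasFDerivAt z (hasFDerivAt_normSq' z)
    exact h2
  have hEqf : fderiv ℝ V =ᶠ[𝓝 x]
      fun z => ψ (q z) • ((2:ℝ) • (innerSL ℝ z : EuclideanSpace ℝ (Fin m) →L[ℝ] ℝ)) := by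
    filter_upwards [hev] with z hz using hz.fderiv
  have hΦC : ContDiffAt ℝ 1 (fderiv ℝ V) x := hVC.fderiv_right (by norm_num)
  have hΦdiff : DifferentiableAt ℝ (fderiv ℝ V) x := hΦC.differentiableAt (by norm_num)
  have coord : ∀ e : EuclideanSpace ℝ (Fin m), fderiv ℝ (fderiv ℝ V) x e e
      = ψ (q x) * (2 * ⟪e, e⟫) + (2 * ⟪e, x⟫) * (χ (q x) * (2 * ⟪x, e⟫)) := by
    intro e
    have h1 : fderiv ℝ (fun z => fderiv ℝ V z e) x
        = ((fderiv ℝ (fderiv ℝ V) x).flip) e := by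
      rw [fderiv_clm_apply hΦdiff (differentiableAt_const e)]
      simp
    have hEq2 : (fun z => fderiv ℝ V z e) =ᶠ[𝓝 x]
        fun z => ψ (q z) * (2 * ⟪e, z⟫) := by
      filter_upwards [hEqf] with z hz
      rw [hz]
      simp [real_inner_comm]
    have hA : HasFDerivAt (fun z => ψ (q z))
        ((χ (q x)) • ((2:ℝ) • (innerSL ℝ x : EuclideanSpace ℝ (Fin m) →L[ℝ] ℝ))) x := by
      have h2 := hψ.comp_hasFDerivAt x (hasFDerivAt_normSq' x)
      exact h2
    have hB : HasFDerivAt (fun z : EuclideanSpace ℝ (Fin m) => 2 * ⟪e, z⟫)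
        ((2:ℝ) • (innerSL ℝ e : EuclideanSpace ℝ (Fin m) →L[ℝ] ℝ)) x := by
      have h3 : HasFDerivAt _ (innerSL ℝ e : EuclideanSpace ℝ (Fin m) →L[ℝ] ℝ) x :=
        (innerSL ℝ e : EuclideanSpace ℝ (Fin m) →L[ℝ] ℝ).hasFDerivAt
      have h4 := h3.const_mul (2:ℝ)
      simpa [innerSL_apply_apply, smul_smul] using h4
    have hg := hA.fun_mul hB
    have h5 : fderiv ℝ (fun z => fderiv ℝ V z e) x e
        = ψ (q x) * (2 * ⟪e, e⟫) + (2 * ⟪e, x⟫) * (χ (q x) * (2 * ⟪x, e⟫)) := by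
      rw [hEq2.fderiv_eq, hg.fderiv]
      simp [innerSL_apply_apply, smul_smul]
      ring
    have h6 : fderiv ℝ (fderiv ℝ V) x e e = fderiv ℝ (fun z => fderiv ℝ V z e) x e := by
      rw [h1]
      simp
    rw [h6, h5]
  rw [show lap (fun z => φ (‖z‖^2)) x = lap V x from rfl, lap_eq_sum_fderiv2]
  have hcoords : ∀ i : Fin m,
      fderiv ℝ (fderiv ℝ V) x (EuclideanSpace.single i 1) (EuclideanSpace.single i 1)
        = 2 * ψ (q x) + 4 * χ (q x) * (x i)^2 := by
    intro i
    rw [coord]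
    have hee : ⟪(EuclideanSpace.single i 1 : EuclideanSpace ℝ (Fin m)),
        EuclideanSpace.single i 1⟫ = 1 := by
      simp [EuclideanSpace.inner_single_left]
    have hex : ⟪(EuclideanSpace.single i 1 : EuclideanSpace ℝ (Fin m)), x⟫ = x i := by
      simp [EuclideanSpace.inner_single_left]
    have hxe : ⟪x, (EuclideanSpace.single i 1 : EuclideanSpace ℝ (Fin m))⟫ = x i := by
      simp [EuclideanSpace.inner_single_right]
    rw [hee, hex, hxe]
    ring
  rw [Finset.sum_congr rfl (fun i _ => hcoords i)]
  rw [Finset.sum_add_distrib, Finset.sum_const]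
  have hsum : ∑ i : Fin m, (x i)^2 = ‖x‖^2 := by
    rw [← real_inner_self_eq_norm_sq, PiLp.inner_apply]
    congr 1
    ext i
    simp [RCLike.inner_apply]
  rw [← Finset.mul_sum, hsum]
  simp [Finset.card_univ]
  ring

lemma hasDerivAt_const_mul_rpow_sub (c e R t : ℝ) (h : t < R^2) :
    HasDerivAt (fun s => c * (R^2 - s) ^ e) (-(c * e) * (R^2 - t) ^ (e - 1)) t := by
  have hne : R^2 - t ≠ 0 := by intro hc; rw [sub_eq_zero] at hc; exact absurd hc.symm (ne_of_lt h)
  have h1 : HasDerivAt (fun s : ℝ => R^2 - s) (-1) t := by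
    simpa using (hasDerivAt_id t).const_sub (R^2)
  have h2 : HasDerivAt (fun y : ℝ => y ^ e) (e * (R^2 - t) ^ (e - 1)) (R^2 - t) :=
    Real.hasDerivAt_rpow_const (Or.inl hne)
  have h3 := (h2.comp t h1).const_mul c
  have h4 : -(c * e) * (R ^ 2 - t) ^ (e - 1) = c * (e * (R ^ 2 - t) ^ (e - 1) * -1) := by ring
  rw [h4]
  exact h3

end LapLemmas

lemma tendsto_barrier_aux (s0 p cst Kδ en : ℝ) (hs00 : 0 ≤ s0) (hppos : 0 < p)
    (hcst : 0 ≤ cst) (hen : en + 2*(-p) < 0) :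
    Filter.Tendsto (fun R : ℝ => (Kδ * (R^2) ^ p + cst * R ^ en) * (R ^ 2 - s0) ^ (-p))
      Filter.atTop (nhds Kδ) := by
  have htendRsq : Tendsto (fun R : ℝ => R^2 - s0) atTop atTop := by
    simpa [sub_eq_add_neg] using
      tendsto_atTop_add_const_right atTop (-s0) (tendsto_pow_atTop (two_ne_zero))
  have h₁ : Tendsto (fun R : ℝ => (R^2) ^ p * (R^2 - s0) ^ (-p)) atTop (𝓝 1) := by
    have hev : (fun R : ℝ => (1 + s0/(R^2 - s0)) ^ p) =ᶠ[atTop]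
        (fun R : ℝ => (R^2) ^ p * (R^2 - s0) ^ (-p)) := by
      filter_upwards [eventually_ge_atTop (s0 + 1)] with R hR
      have hs : s0 < R^2 := by nlinarith
      have hpos : 0 < R^2 - s0 := by linarith
      have e1 : 1 + s0/(R^2-s0) = R^2/(R^2-s0) := by field_simp; ring
      rw [e1, Real.div_rpow (by positivity) hpos.le, Real.rpow_neg hpos.le, div_eq_mul_inv]
    have h0 : Tendsto (fun R : ℝ => s0/(R^2 - s0)) atTop (𝓝 0) :=
      tendsto_const_nhds.div_atTop htendRsq
    have h1' : Tendsto (fun R : ℝ => 1 + s0/(R^2 - s0)) atTop (𝓝 (1:ℝ)) := by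
      simpa using tendsto_const_nhds.add h0
    have hcont : ContinuousAt (fun y : ℝ => y ^ p) 1 :=
      Real.continuousAt_rpow_const 1 p (Or.inl one_ne_zero)
    have h2 := hcont.tendsto.comp h1'
    rw [Real.one_rpow] at h2
    exact h2.congr' hev
  have htail : Tendsto (fun R : ℝ => (2:ℝ)^p * R ^ (en + 2*(-p))) atTop (𝓝 0) := by
    have h := tendsto_rpow_neg_atTop (y := -(en + 2*(-p))) (by linarith)
    have h' : Tendsto (fun x : ℝ => x ^ (en + 2*(-p))) atTop (𝓝 0) := by
      simpa [neg_neg] using h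
    simpa using tendsto_const_nhds.mul h'
  have h₂ : Tendsto (fun R : ℝ => R ^ en * (R^2 - s0) ^ (-p)) atTop (𝓝 0) := by
    apply tendsto_of_tendsto_of_tendsto_of_le_of_le' tendsto_const_nhds htail
    · filter_upwards [eventually_ge_atTop (max 1 (2*s0))] with R hR
      have hR1 : (1:ℝ) ≤ R := le_trans (le_max_left _ _) hR
      have hRpos : (0:ℝ) < R := by linarith
      have hs2 : 2*s0 ≤ R := le_trans (le_max_right _ _) hR
      have hR2 : R ≤ R^2 := by nlinarith
      have hpos : (0:ℝ) ≤ R^2 - s0 := by linarith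
      positivity
    · filter_upwards [eventually_ge_atTop (max 1 (2*s0))] with R hR
      have hR1 : (1:ℝ) ≤ R := le_trans (le_max_left _ _) hR
      have hRpos : (0:ℝ) < R := by linarith
      have hs2 : 2*s0 ≤ R := le_trans (le_max_right _ _) hR
      have hRR2 : R ≤ R^2 := by nlinarith
      have hhalf : s0 ≤ R^2/2 := by linarith
      have hpos2 : (0:ℝ) < R^2/2 := by positivity
      have hmono : (R^2 - s0)^(-p) ≤ (R^2/2)^(-p) :=
        Real.rpow_le_rpow_of_nonpos hpos2 (by linarith) (neg_nonpos.2 hppos.le)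
      have heq : (R^2/2)^(-p) = (2:ℝ)^p * (R^2)^(-p) := by
        rw [Real.div_rpow (by positivity) (by norm_num : (0:ℝ) ≤ 2),
          Real.rpow_neg (by norm_num : (0:ℝ) ≤ 2), div_eq_mul_inv, inv_inv, mul_comm]
      have hR2e : (R^2:ℝ) = R ^ ((2:ℕ):ℝ) := (Real.rpow_natCast R 2).symm
      have hsplit : (R^2:ℝ)^(-p) = R ^ ((2:ℝ)*(-p)) := by
        rw [hR2e, ← Real.rpow_mul hRpos.le]
        norm_num
      calc R ^ en * (R^2 - s0) ^ (-p)
          ≤ R ^ en * ((2:ℝ)^p * (R^2)^(-p)) := by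
            rw [← heq]
            exact mul_le_mul_of_nonneg_left hmono (Real.rpow_nonneg hRpos.le _)
        _ = (2:ℝ)^p * (R ^ en * R ^ ((2:ℝ)*(-p))) := by rw [hsplit]; ring
        _ = (2:ℝ)^p * R ^ (en + 2*(-p)) := by rw [← Real.rpow_add hRpos]
  have hfinal : Tendsto (fun R : ℝ =>
      Kδ * ((R^2)^p * (R^2 - s0)^(-p)) + cst * (R ^ en * (R^2 - s0)^(-p)))
      atTop (𝓝 (Kδ * 1 + cst * 0)) :=
    (tendsto_const_nhds.mul h₁).add (tendsto_const_nhds.mul h₂)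
  have heval : (Kδ * 1 + cst * 0) = Kδ := by ring
  rw [heval] at hfinal
  exact hfinal.congr (fun R => by ring)

set_option maxHeartbeats 1000000 in
lemma barrier_comparison {m : ℕ} (u b : EuclideanSpace ℝ (Fin m) → ℝ)
    (hu : ContDiff ℝ 2 u) (hupos : ∀ x, 0 < u x) (hbpos : ∀ x, 0 < b x)
    (σ p β Kδ cb R : ℝ) (xb : EuclideanSpace ℝ (Fin m))
    (hσ1 : 0 < σ - 1) (hppos : 0 < p) (hpσ : p * (σ - 1) = 2) (hβpos : 0 < β)
    (hKδ1 : 1 ≤ Kδ) (hcb : 0 < cb) (hRpos : 0 < R) (hxbR : ‖xb‖ + 1 ≤ R)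
    (keyA : ∀ z, Kδ ≤ u z → b z * (β * u z ^ σ) ≤ lap u z)
    (hbR : ∀ z : EuclideanSpace ℝ (Fin m), ‖z‖ ≤ R → cb ≤ b z) :
    u xb ≤ (Kδ * (R^2) ^ p
      + (p * (2*(m:ℝ) + 4*(p+1)) * β⁻¹ * cb⁻¹ * R^2) ^ (1/(σ-1))) * (R^2 - ‖xb‖^2) ^ (-p) := by
  have hKδ0 : 0 < Kδ := lt_of_lt_of_le one_pos hKδ1
  set E2 := 2*(m:ℝ) + 4*(p+1) with hE2def
  have hmnn : (0:ℝ) ≤ (m:ℝ) := Nat.cast_nonneg m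
  have hE2pos : 0 < E2 := by rw [hE2def]; positivity
  set A₁ := Kδ * (R^2) ^ p with hA₁def
  set A₂ := (p * E2 * β⁻¹ * cb⁻¹ * R^2) ^ (1/(σ-1)) with hA₂def
  have hR2pos : (0:ℝ) < R^2 := by positivity
  have hR2ppos : 0 < (R^2) ^ p := Real.rpow_pos_of_pos hR2pos p
  have hA₁pos : 0 < A₁ := mul_pos hKδ0 hR2ppos
  have hbase2 : 0 < p * E2 * β⁻¹ * cb⁻¹ * R^2 := by
    have h1 : 0 < β⁻¹ := inv_pos.2 hβpos
    have h2 : 0 < cb⁻¹ := inv_pos.2 hcb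
    positivity
  have hA₂pos : 0 < A₂ := Real.rpow_pos_of_pos hbase2 _
  set A := A₁ + A₂ with hAdef
  have hApos : 0 < A := by positivity
  have hxb0 : (0:ℝ) ≤ ‖xb‖ := norm_nonneg xb
  have hs0R : ‖xb‖^2 < R^2 := by nlinarith
  by_contra hcon
  push_neg at hcon
  -- barrier functions
  set φ : ℝ → ℝ := fun t => A * (R^2 - t) ^ (-p) with hφdef
  set ψ : ℝ → ℝ := fun t => (A * p) * (R^2 - t) ^ (-(p+1)) with hψdef
  set χ : ℝ → ℝ := fun t => (A * (p * (p+1))) * (R^2 - t) ^ (-(p+2)) with hχdef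
  have hφψ : ∀ t, t < R^2 → HasDerivAt φ (ψ t) t := by
    intro t ht
    have h1 := hasDerivAt_const_mul_rpow_sub A (-p) R t ht
    have h2 : -(A * -p) * (R^2 - t) ^ (-p - 1) = (A * p) * (R^2 - t) ^ (-(p+1)) := by
      rw [show -p - 1 = -(p+1) by ring]; ring
    rw [h2] at h1
    exact h1
  have hψχ : ∀ t, t < R^2 → HasDerivAt ψ (χ t) t := by
    intro t ht
    have h1 := hasDerivAt_const_mul_rpow_sub (A * p) (-(p+1)) R t ht
    have h2 : -(A * p * -(p+1)) * (R^2 - t) ^ (-(p+1) - 1)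
        = (A * (p * (p+1))) * (R^2 - t) ^ (-(p+2)) := by
      rw [show -(p+1) - 1 = -(p+2) by ring]; ring
    rw [h2] at h1
    exact h1
  set v : EuclideanSpace ℝ (Fin m) → ℝ := fun z => φ (‖z‖^2) with hvdef
  have hvC : ∀ z : EuclideanSpace ℝ (Fin m), ‖z‖^2 < R^2 → ContDiffAt ℝ 2 v z := by
    intro z hz
    have h1 : ContDiffAt ℝ 2 (fun w : EuclideanSpace ℝ (Fin m) => R^2 - ‖w‖^2) z :=
      contDiffAt_const.sub (contDiff_id.norm_sq ℝ).contDiffAt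
    have h2 : ContDiffAt ℝ 2 (fun w : EuclideanSpace ℝ (Fin m) => (R^2 - ‖w‖^2) ^ (-p)) z :=
      h1.rpow_const_of_ne (ne_of_gt (by linarith : (0:ℝ) < R^2 - ‖z‖^2))
    exact contDiffAt_const.mul h2
  have hvlap : ∀ z : EuclideanSpace ℝ (Fin m), ‖z‖^2 < R^2 →
      lap v z = 2*m*ψ (‖z‖^2) + 4*(‖z‖^2) * χ (‖z‖^2) := by
    intro z hz
    apply lap_comp_normSq φ ψ χ z (hvC z hz) ?_ (hψχ _ hz)
    filter_upwards [Iio_mem_nhds hz] with t ht using hφψ t ht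
  -- max of u on closed ball
  obtain ⟨zM, hzMmem, hzMmax⟩ :=
    (isCompact_closedBall (0:EuclideanSpace ℝ (Fin m)) R).exists_isMaxOn
      ⟨0, Metric.mem_closedBall_self hRpos.le⟩ hu.continuous.continuousOn
  set M := u zM + 1 with hMdef
  have hMpos : 0 < M := by have := hupos zM; rw [hMdef]; linarith
  have hMbound : ∀ z : EuclideanSpace ℝ (Fin m), ‖z‖ ≤ R → u z + 1 ≤ M := by
    intro z hz
    have h := hzMmax (mem_closedBall_zero_iff.2 hz)
    rw [hMdef]
    have h' : u z ≤ u zM := h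
    linarith
  set t₁ := min ((A / M) ^ (1/p)) (R^2 - ‖xb‖^2) with ht₁def
  have ht₁pos : 0 < t₁ :=
    lt_min (Real.rpow_pos_of_pos (div_pos hApos hMpos) _) (by linarith)
  set T := {z : EuclideanSpace ℝ (Fin m) | ‖z‖^2 ≤ R^2 - t₁} with hTdef
  have hTclosed : IsClosed T := isClosed_Iic.preimage (continuous_norm.pow 2)
  have hTnorm : ∀ z ∈ T, ‖z‖ ≤ R := by
    intro z hz
    have hz' : ‖z‖^2 ≤ R^2 - t₁ := hz
    have h2 : ‖z‖^2 ≤ R^2 := by linarith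
    calc ‖z‖ = Real.sqrt (‖z‖^2) := (Real.sqrt_sq (norm_nonneg z)).symm
      _ ≤ Real.sqrt (R^2) := Real.sqrt_le_sqrt h2
      _ = R := Real.sqrt_sq hRpos.le
  have hTlt : ∀ z ∈ T, ‖z‖^2 < R^2 := by
    intro z hz; have hz' : ‖z‖^2 ≤ R^2 - t₁ := hz; linarith
  have hTsub : T ⊆ Metric.closedBall 0 R := fun z hz => mem_closedBall_zero_iff.2 (hTnorm z hz)
  have hTcompact : IsCompact T :=
    Metric.isCompact_of_isClosed_isBounded hTclosed (Metric.isBounded_closedBall.subset hTsub)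
  have hxbT : xb ∈ T := by
    have h1 : t₁ ≤ R^2 - ‖xb‖^2 := min_le_right _ _
    show ‖xb‖^2 ≤ R^2 - t₁
    linarith
  set w : EuclideanSpace ℝ (Fin m) → ℝ := fun z => u z - v z with hwdef
  have hwcont : ContinuousOn w T := by
    apply ContinuousOn.sub hu.continuous.continuousOn
    intro z hz
    exact ((hvC z (hTlt z hz)).continuousAt).continuousWithinAt
  obtain ⟨y, hyT, hymax⟩ := hTcompact.exists_isMaxOn ⟨xb, hxbT⟩ hwcont
  have hρy : 0 < R^2 - ‖y‖^2 := by have := hTlt y hyT; linarith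
  have hvxb : v xb = A * (R^2 - ‖xb‖^2) ^ (-p) := rfl
  have hwxb : 0 < w xb := by
    show 0 < u xb - v xb
    rw [hvxb]
    linarith
  have hwy : w xb ≤ w y := hymax hxbT
  have hyball : ‖y‖ < R := by
    have h := hTlt y hyT
    nlinarith [norm_nonneg y]
  have hballmem : Metric.ball (0:EuclideanSpace ℝ (Fin m)) R ∈ 𝓝 y :=
    Metric.isOpen_ball.mem_nhds (mem_ball_zero_iff.2 hyball)
  have hlocmax : IsLocalMax w y := by
    filter_upwards [hballmem] with z hz
    rcases le_or_gt (‖z‖^2) (R^2 - t₁) with hcase|hcase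
    · exact hymax hcase
    · have hzR : ‖z‖ < R := mem_ball_zero_iff.1 hz
      have hρz : 0 < R^2 - ‖z‖^2 := by nlinarith [norm_nonneg z]
      have h1 : R^2 - ‖z‖^2 < t₁ := by linarith
      have h2 : (R^2 - ‖z‖^2) ^ p ≤ A / M := by
        have h3 : (R^2-‖z‖^2)^p ≤ ((A/M)^(1/p))^p :=
          Real.rpow_le_rpow hρz.le (le_trans h1.le (min_le_left _ _)) hppos.le
        rwa [← Real.rpow_mul (div_pos hApos hMpos).le, one_div_mul_cancel (ne_of_gt hppos),
          Real.rpow_one] at h3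
      have hrppos : 0 < (R^2 - ‖z‖^2) ^ p := Real.rpow_pos_of_pos hρz _
      have h4 : M ≤ v z := by
        have h5 : M * (R^2-‖z‖^2)^p ≤ A := by
          have h6 := mul_le_mul_of_nonneg_left h2 hMpos.le
          rwa [mul_div_cancel₀ _ (ne_of_gt hMpos)] at h6
        have hvz : v z = A * (R^2 - ‖z‖^2) ^ (-p) := rfl
        rw [hvz, Real.rpow_neg hρz.le, ← div_eq_mul_inv, le_div_iff₀ hrppos]
        exact h5
      have h6 := hMbound z hzR.le
      have h7 : w z ≤ -1 := by
        show u z - v z ≤ -1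
        linarith
      linarith
  have hvy : v y = A * (R^2 - ‖y‖^2) ^ (-p) := rfl
  have hwy' : 0 < w y := lt_of_lt_of_le hwxb hwy
  have hvyuy : v y < u y := by
    have h : 0 < u y - v y := hwy'
    linarith
  have hyn0 : (0:ℝ) ≤ ‖y‖^2 := by positivity
  have hρyR2 : R^2 - ‖y‖^2 ≤ R^2 := by linarith
  have hKδvy : Kδ ≤ v y := by
    have h1 : (R^2) ^ (-p) ≤ (R^2 - ‖y‖^2) ^ (-p) :=
      Real.rpow_le_rpow_of_nonpos hρy hρyR2 (neg_nonpos.2 hppos.le)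
    have h2 : A₁ * (R^2)^(-p) ≤ A * (R^2-‖y‖^2)^(-p) :=
      mul_le_mul (by linarith) h1 (Real.rpow_nonneg hR2pos.le _) hApos.le
    have h3 : A₁ * (R^2)^(-p) = Kδ := by
      rw [hA₁def, mul_assoc, ← Real.rpow_add hR2pos]
      simp
    rw [hvy]
    linarith
  have hKδuy : Kδ ≤ u y := le_trans hKδvy hvyuy.le
  have hlapcomp : lap u y ≤ lap v y :=
    lap_le_lap_of_isLocalMax_sub hu.contDiffAt (hvC y (hTlt y hyT)) hlocmax
  have hlapu := keyA y hKδuy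
  have hlapv := hvlap y (hTlt y hyT)
  set ρy := R^2 - ‖y‖^2 with hρydef
  have hsplit1 : ρy ^ (-(p+1)) = ρy * ρy ^ (-(p+2)) := by
    rw [show -(p+1) = 1 + -(p+2) by ring, Real.rpow_add hρy, Real.rpow_one]
  have hρy2pos : 0 < ρy ^ (-(p+2)) := Real.rpow_pos_of_pos hρy _
  have hψy : ψ (‖y‖^2) = (A*p) * ρy^(-(p+1)) := rfl
  have hχy : χ (‖y‖^2) = (A*(p*(p+1))) * ρy^(-(p+2)) := rfl
  have hb1 : 2*(m:ℝ)*ψ (‖y‖^2) ≤ 2*(m:ℝ)*(A*p) * R^2 * ρy^(-(p+2)) := by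
    rw [hψy, hsplit1]
    have h := mul_le_mul_of_nonneg_right hρyR2 hρy2pos.le
    calc 2*(m:ℝ)*((A*p) * (ρy * ρy^(-(p+2))))
        = (2*(m:ℝ)*(A*p)) * (ρy * ρy^(-(p+2))) := by ring
      _ ≤ (2*(m:ℝ)*(A*p)) * (R^2 * ρy^(-(p+2))) := by
          apply mul_le_mul_of_nonneg_left h
          positivity
      _ = 2*(m:ℝ)*(A*p) * R^2 * ρy^(-(p+2)) := by ring
  have hb2 : 4*(‖y‖^2)*χ (‖y‖^2) ≤ 4*R^2*(A*(p*(p+1)))*ρy^(-(p+2)) := by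
    rw [hχy]
    have h : ‖y‖^2 ≤ R^2 := by linarith
    calc 4*(‖y‖^2)*((A*(p*(p+1)))*ρy^(-(p+2)))
        = (4*(A*(p*(p+1)))*ρy^(-(p+2))) * (‖y‖^2) := by ring
      _ ≤ (4*(A*(p*(p+1)))*ρy^(-(p+2))) * R^2 := by
          apply mul_le_mul_of_nonneg_left h
          positivity
      _ = 4*R^2*(A*(p*(p+1)))*ρy^(-(p+2)) := by ring
  have hsumeq : 2*(m:ℝ)*(A*p) * R^2 * ρy^(-(p+2)) + 4*R^2*(A*(p*(p+1)))*ρy^(-(p+2))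
      = A * p * E2 * R^2 * ρy ^ (-(p+2)) := by
    rw [hE2def]; ring
  have hlapvle : lap v y ≤ A * p * E2 * R^2 * ρy ^ (-(p+2)) := by
    rw [hlapv]
    linarith
  have hby : cb ≤ b y := hbR y (hTnorm y hyT)
  have hvypos : 0 < v y := by
    rw [hvy]
    exact mul_pos hApos (Real.rpow_pos_of_pos hρy _)
  have hvyσ : v y ^ σ = A^σ * ρy ^ (-(p+2)) := by
    rw [hvy, Real.mul_rpow hApos.le (Real.rpow_nonneg hρy.le _)]
    congr 1
    rw [← Real.rpow_mul hρy.le]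
    congr 1
    linear_combination -hpσ
  have hAσ : A ^ σ = A ^ (σ-1) * A := by
    have h := Real.rpow_add_one (ne_of_gt hApos) (σ-1)
    simpa [sub_add_cancel] using h
  have hA2σ : p * E2 * β⁻¹ * cb⁻¹ * R^2 ≤ A ^ (σ - 1) := by
    have h1 : A₂ ≤ A := by linarith
    have h2 : A₂ ^ (σ-1) ≤ A ^ (σ-1) := Real.rpow_le_rpow hA₂pos.le h1 hσ1.le
    have h3 : A₂ ^ (σ-1) = p * E2 * β⁻¹ * cb⁻¹ * R^2 := by
      rw [hA₂def, ← Real.rpow_mul hbase2.le, one_div_mul_cancel (ne_of_gt hσ1),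
        Real.rpow_one]
    linarith
  have hvyσpos : 0 < v y ^ σ := Real.rpow_pos_of_pos hvypos _
  have hAσ1pos : 0 < A ^ (σ-1) := Real.rpow_pos_of_pos hApos _
  have hchain : A * p * E2 * R^2 * ρy ^ (-(p+2)) ≤ b y * (β * v y ^ σ) := by
    have h1 : p * E2 * R^2 ≤ cb * β * A^(σ-1) := by
      have h2 := mul_le_mul_of_nonneg_left hA2σ (mul_pos hcb hβpos).le
      have h3 : cb * β * (p * E2 * β⁻¹ * cb⁻¹ * R^2) = p * E2 * R^2 := by
        field_simp
      rw [h3] at h2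
      exact h2
    calc A * p * E2 * R^2 * ρy ^ (-(p+2))
        = (p * E2 * R^2) * (A * ρy ^ (-(p+2))) := by ring
      _ ≤ (cb * β * A^(σ-1)) * (A * ρy ^ (-(p+2))) := by
          apply mul_le_mul_of_nonneg_right h1
          positivity
      _ = cb * (β * (A^(σ-1) * A * ρy ^ (-(p+2)))) := by ring
      _ = cb * (β * v y ^ σ) := by rw [hvyσ, hAσ]; try ring
      _ ≤ b y * (β * v y ^ σ) := by
          apply mul_le_mul_of_nonneg_right hby
          positivity
  have hfin : b y * (β * u y ^ σ) ≤ b y * (β * v y ^ σ) := by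
    calc b y * (β * u y ^ σ) ≤ lap u y := hlapu
      _ ≤ lap v y := hlapcomp
      _ ≤ A * p * E2 * R^2 * ρy ^ (-(p+2)) := hlapvle
      _ ≤ b y * (β * v y ^ σ) := hchain
  have huσ : u y ^ σ ≤ v y ^ σ := by
    have h1 := (mul_le_mul_iff_right₀ (hbpos y)).1 hfin
    exact (mul_le_mul_iff_right₀ hβpos).1 h1
  have hvup : v y ^ σ < u y ^ σ := Real.rpow_lt_rpow hvypos.le hvyuy (by linarith)
  linarith

/-- A priori upper bound for positive solutions of the Lichnerowicz differential
inequality on Euclidean space. -/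
theorem lichnerowicz_apriori_upper_bound {m : ℕ} (hm : 1 ≤ m)
    (a b c : EuclideanSpace ℝ (Fin m) → ℝ)
    (ha : Continuous a) (hb : Continuous b) (hc : Continuous c)
    (hbd : ∃ M : ℝ, ∀ x, max (a x) 0 + max (c x) 0 ≤ M)
    (hbpos : ∀ x, 0 < b x)
    (C R₀ μ : ℝ) (hC : 0 < C) (hR₀ : 0 < R₀) (hμ0 : 0 ≤ μ) (hμ2 : μ < 2)
    (hblow : ∀ x, R₀ ≤ ‖x‖ → C * ‖x‖ ^ (-μ) ≤ b x)
    (σ τ γ : ℝ) (hσ : 1 < σ) (hτ : τ < 1)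
    (u : EuclideanSpace ℝ (Fin m) → ℝ) (hu : ContDiff ℝ 2 u) (hupos : ∀ x, 0 < u x)
    (hineq : ∀ x, γ < u x →
      0 ≤ lap u x + a x * u x - b x * u x ^ σ + c x * u x ^ τ)
    (H₀ : ℝ) (hH₀0 : 0 ≤ H₀)
    (hH₀ : ∀ x, max 1 γ < u x → (max (a x) 0 + max (c x) 0) / b x ≤ H₀) :
    BddAbove (Set.range u) ∧
      ∀ x, u x ≤ max (max 1 γ) (H₀ ^ (1 / (σ - 1))) := by
  have hσ1 : 0 < σ - 1 := by linarith
  set K := max (max 1 γ) (H₀ ^ (1 / (σ - 1))) with hKdef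
  have hK1 : (1:ℝ) ≤ K := le_trans (le_max_left 1 γ) (le_max_left _ _)
  suffices claim : ∀ x, u x ≤ K by
    exact ⟨⟨K, by rintro _ ⟨x, rfl⟩; exact claim x⟩, claim⟩
  intro xb
  refine le_of_forall_pos_le_add (fun δ hδ => ?_)
  have hKδ1 : 1 < K + δ := by linarith
  have hKδ0 : 0 < K + δ := by linarith
  have hH₀lt : H₀ < (K + δ) ^ (σ - 1) := by
    have h1 : H₀ ^ (1 / (σ - 1)) < K + δ :=
      lt_of_le_of_lt (le_max_right (max 1 γ) _) (by linarith)
    have h2 := Real.rpow_lt_rpow (Real.rpow_nonneg hH₀0 _) h1 hσ1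
    rwa [← Real.rpow_mul hH₀0, one_div_mul_cancel (ne_of_gt hσ1), Real.rpow_one] at h2
  have hKδσ : 0 < (K + δ) ^ (σ - 1) := Real.rpow_pos_of_pos hKδ0 _
  set β := 1 - H₀ / (K + δ) ^ (σ - 1) with hβdef
  have hβpos : 0 < β := by
    rw [hβdef, sub_pos]; exact (div_lt_one hKδσ).2 hH₀lt
  have hβle1 : β ≤ 1 := by
    have : 0 ≤ H₀ / (K + δ) ^ (σ - 1) := div_nonneg hH₀0 hKδσ.le
    rw [hβdef]; linarith
  -- Step A: pointwise differential inequality above level K + δ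
  have keyA : ∀ z, K + δ ≤ u z → b z * (β * u z ^ σ) ≤ lap u z := by
    intro z hz
    have hUpos := hupos z
    have hU1 : 1 < u z := lt_of_lt_of_le hKδ1 hz
    have hγK : γ ≤ K := le_trans (le_max_right 1 γ) (le_max_left _ _)
    have hγz : γ < u z := by linarith
    have hgsK : max 1 γ ≤ K := le_max_left _ _
    have hgsz : max 1 γ < u z := by linarith
    have h0 := hineq z hγz
    have hH := (div_le_iff₀ (hbpos z)).1 (hH₀ z hgsz)
    have h1 : a z * u z ≤ max (a z) 0 * u z :=
      mul_le_mul_of_nonneg_right (le_max_left _ _) hUpos.le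
    have hτ1 : u z ^ τ ≤ u z := by
      have h := Real.rpow_le_rpow_of_exponent_le hU1.le hτ.le
      rwa [Real.rpow_one] at h
    have hτpos : 0 < u z ^ τ := Real.rpow_pos_of_pos hUpos τ
    have h2 : c z * u z ^ τ ≤ max (c z) 0 * u z := by
      calc c z * u z ^ τ ≤ max (c z) 0 * u z ^ τ :=
            mul_le_mul_of_nonneg_right (le_max_left _ _) hτpos.le
        _ ≤ max (c z) 0 * u z := mul_le_mul_of_nonneg_left hτ1 (le_max_right (c z) 0)
    have h3 : (max (a z) 0 + max (c z) 0) * u z ≤ H₀ * b z * u z :=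
      mul_le_mul_of_nonneg_right hH hUpos.le
    have hexp : (max (a z) 0 + max (c z) 0) * u z
        = max (a z) 0 * u z + max (c z) 0 * u z := by ring
    have h5 : (K + δ) ^ (σ - 1) ≤ u z ^ (σ - 1) := Real.rpow_le_rpow hKδ0.le hz hσ1.le
    have h4 : H₀ ≤ (1 - β) * u z ^ (σ - 1) := by
      have heq : (1 - β) = H₀ / (K + δ) ^ (σ - 1) := by rw [hβdef]; ring
      rw [heq]
      calc H₀ = H₀ / (K + δ) ^ (σ - 1) * (K + δ) ^ (σ - 1) := by
            field_simp
        _ ≤ H₀ / (K + δ) ^ (σ - 1) * u z ^ (σ - 1) :=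
            mul_le_mul_of_nonneg_left h5 (div_nonneg hH₀0 hKδσ.le)
    have h6 : u z ^ (σ - 1) * u z = u z ^ σ := by
      rw [← Real.rpow_add_one (ne_of_gt hUpos)]
      ring_nf
    have h7 : H₀ * b z * u z ≤ (1 - β) * u z ^ (σ - 1) * b z * u z := by
      have h8 := mul_le_mul_of_nonneg_right h4 (mul_nonneg (hbpos z).le hUpos.le)
      calc H₀ * b z * u z = H₀ * (b z * u z) := by ring
        _ ≤ (1 - β) * u z ^ (σ - 1) * (b z * u z) := h8
        _ = (1 - β) * u z ^ (σ - 1) * b z * u z := by ring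
    have h9 : (1 - β) * u z ^ (σ - 1) * b z * u z = (1 - β) * (b z * u z ^ σ) := by
      rw [← h6]; ring
    have h10 : b z * (β * u z ^ σ) = b z * u z ^ σ - (1 - β) * (b z * u z ^ σ) := by ring
    linarith
  -- Step B: lower bound for b on balls
  obtain ⟨z₀, hz₀mem, hz₀min⟩ :=
    (isCompact_closedBall (0 : EuclideanSpace ℝ (Fin m)) R₀).exists_isMinOn
      ⟨0, Metric.mem_closedBall_self hR₀.le⟩ hb.continuousOn
  set m₀ := b z₀ with hm₀def
  have hm₀pos : 0 < m₀ := hbpos z₀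
  set C₂ := min m₀ C with hC₂def
  have hC₂pos : 0 < C₂ := lt_min hm₀pos hC
  have hbound : ∀ R, max R₀ 1 ≤ R → ∀ z : EuclideanSpace ℝ (Fin m),
      ‖z‖ ≤ R → C₂ * R ^ (-μ) ≤ b z := by
    intro R hR z hzR
    have hR1 : (1:ℝ) ≤ R := le_trans (le_max_right _ _) hR
    have hRpos : (0:ℝ) < R := by linarith
    have hRμ : R ^ (-μ) ≤ 1 := Real.rpow_le_one_of_one_le_of_nonpos hR1 (neg_nonpos.2 hμ0)
    have hRμ0 : 0 ≤ R ^ (-μ) := Real.rpow_nonneg hRpos.le _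
    by_cases hcase : ‖z‖ ≤ R₀
    · have h1 : m₀ ≤ b z := hz₀min (mem_closedBall_zero_iff.2 hcase)
      calc C₂ * R ^ (-μ) ≤ C₂ * 1 := mul_le_mul_of_nonneg_left hRμ hC₂pos.le
        _ = C₂ := mul_one _
        _ ≤ m₀ := min_le_left _ _
        _ ≤ b z := h1
    · push_neg at hcase
      have h2 := hblow z hcase.le
      have h3 : R ^ (-μ) ≤ ‖z‖ ^ (-μ) :=
        Real.rpow_le_rpow_of_nonpos (lt_of_lt_of_le hR₀ hcase.le) hzR (neg_nonpos.2 hμ0)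
      calc C₂ * R ^ (-μ) ≤ C * ‖z‖ ^ (-μ) :=
            mul_le_mul (min_le_right _ _) h3 hRμ0 hC.le
        _ ≤ b z := h2
  -- constants for the barrier
  set p := 2 / (σ - 1) with hpdef
  have hppos : 0 < p := div_pos two_pos hσ1
  set E2 := 2 * (m : ℝ) + 4 * (p + 1) with hE2def
  have hmpos : (0:ℝ) < m := by exact_mod_cast hm
  have hE2pos : 0 < E2 := by positivity
  set s0 := ‖xb‖ ^ 2 with hs0def
  have hs00 : 0 ≤ s0 := by positivity
  set cst := (p * E2 * β⁻¹ * C₂⁻¹) ^ (1 / (σ - 1)) with hcstdef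
  have hcstpos : 0 < cst := Real.rpow_pos_of_pos (by positivity) _
  set Rmin := max (max R₀ 1) (‖xb‖ + 1) with hRmindef
  -- Step C: barrier comparison
  have keyC : ∀ R, Rmin ≤ R →
      u xb ≤ ((K + δ) * (R^2) ^ p + cst * R ^ ((2 + μ)/(σ - 1))) * (R ^ 2 - s0) ^ (-p) := by
    intro R hR
    have hR01 : max R₀ 1 ≤ R := le_trans (le_max_left _ _) hR
    have hR1 : (1:ℝ) ≤ R := le_trans (le_max_right R₀ 1) hR01
    have hRpos : (0:ℝ) < R := by linarith
    have hxbR : ‖xb‖ + 1 ≤ R := le_trans (le_max_right _ _) hR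
    have hcbpos : 0 < C₂ * R ^ (-μ) := mul_pos hC₂pos (Real.rpow_pos_of_pos hRpos _)
    have hpσ2 : p * (σ - 1) = 2 := by rw [hpdef]; field_simp
    have hKδ1' : (1:ℝ) ≤ K + δ := by linarith
    have h := barrier_comparison u b hu hupos hbpos σ p β (K+δ) (C₂ * R^(-μ)) R xb
      hσ1 hppos hpσ2 hβpos hKδ1' hcbpos hRpos hxbR keyA (fun z hz => hbound R hR01 z hz)
    have hRμinv : (R ^ (-μ))⁻¹ = R ^ μ := by
      rw [← Real.rpow_neg hRpos.le, neg_neg]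
    have hRmul : R ^ μ * R^2 = R ^ ((2:ℝ) + μ) := by
      have hcast : (R^2:ℝ) = R ^ ((2:ℕ):ℝ) := (Real.rpow_natCast R 2).symm
      rw [hcast, ← Real.rpow_add hRpos]
      norm_num [add_comm]
    have h1 : p * (2*(m:ℝ) + 4*(p+1)) * β⁻¹ * (C₂ * R^(-μ))⁻¹ * R^2
        = (p * E2 * β⁻¹ * C₂⁻¹) * R ^ ((2:ℝ) + μ) := by
      calc p * (2*(m:ℝ) + 4*(p+1)) * β⁻¹ * (C₂ * R^(-μ))⁻¹ * R^2
          = (p * (2*(m:ℝ) + 4*(p+1)) * β⁻¹ * C₂⁻¹) * (R ^ μ * R^2) := by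
            rw [mul_inv, hRμinv]; ring
        _ = (p * E2 * β⁻¹ * C₂⁻¹) * R ^ ((2:ℝ) + μ) := by rw [hRmul, ← hE2def]
    have hA₂eq : (p * (2*(m:ℝ) + 4*(p+1)) * β⁻¹ * (C₂ * R^(-μ))⁻¹ * R^2) ^ (1/(σ-1))
        = cst * R ^ ((2 + μ)/(σ - 1)) := by
      have hbasepos : (0:ℝ) < p * E2 * β⁻¹ * C₂⁻¹ :=
        mul_pos (mul_pos (mul_pos hppos hE2pos) (inv_pos.2 hβpos)) (inv_pos.2 hC₂pos)
      rw [h1, Real.mul_rpow hbasepos.le (Real.rpow_nonneg hRpos.le _),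
        ← Real.rpow_mul hRpos.le, ← hcstdef, mul_one_div]
    rw [hA₂eq] at h
    rw [← hs0def] at h
    exact h
  -- Step D: limit as R → ∞
  have he2 : (2 + μ)/(σ - 1) + 2*(-p) < 0 := by
    have h : (2 + μ)/(σ - 1) + 2*(-p) = (μ - 2)/(σ - 1) := by
      rw [hpdef]; field_simp; ring
    rw [h]
    exact div_neg_of_neg_of_pos (by linarith) hσ1
  have hlim : Tendsto (fun R : ℝ =>
      ((K + δ) * (R^2) ^ p + cst * R ^ ((2 + μ)/(σ - 1))) * (R ^ 2 - s0) ^ (-p))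
      atTop (𝓝 (K + δ)) :=
    tendsto_barrier_aux s0 p cst (K + δ) ((2 + μ)/(σ - 1)) hs00 hppos hcstpos.le he2
  exact ge_of_tendsto hlim ((eventually_ge_atTop Rmin).mono (fun R hR => keyC R hR))
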